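/- Let k be a field and (A, 𝔪) a local k-algebra with residue field K = A/𝔪. Let Ã = K ⊗_k A, let M̃ be the kernel of the evaluation map Ã → K, λ⊗a ↦ λ·a(x), and let ϑ : 𝔪/𝔪² → M̃/M̃² be the K-linear map induced by a ↦ 1⊗a. Then the sequence 𝔪/𝔪² →(ϑ) M̃/M̃² → Ω_{K/k} → 0 of K-vector spaces is exact: the second map is surjective and its kernel equals the image of ϑ. -/
import Mathlib

open IsLocalRing TensorProduct

section LocalAlgebra

variable (k A : Type*) [Field k] [CommRing A] [IsLocalRing A] [Algebra k A]

instance : IsScalarTower k A (ResidueField A) :=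
  IsScalarTower.of_algebraMap_eq fun x =>
    (IsLocalRing.ResidueField.map_residue (algebraMap k A) x).symm

/-- The evaluation map `Ã = K ⊗_k A → K`, `λ ⊗ a ↦ λ·a(x)`. -/
noncomputable def ev : (ResidueField A ⊗[k] A) →ₐ[ResidueField A] ResidueField A :=
  Algebra.TensorProduct.lift (AlgHom.id _ _) (IsScalarTower.toAlgHom k A (ResidueField A))
    fun _ _ => Commute.all _ _

/-- The ideal `M̃ = ker(ev) ⊆ Ã`. -/
noncomputable def Mker : Ideal (ResidueField A ⊗[k] A) := RingHom.ker (ev k A)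

/-- For `m ∈ 𝔪`, the element `1 ⊗ m` of `M̃`. -/
noncomputable def oneTmul (m : maximalIdeal A) : Mker k A :=
  ⟨(1 : ResidueField A) ⊗ₜ[k] (m : A), by
    simp only [Mker, RingHom.mem_ker, ev, Algebra.TensorProduct.lift_tmul, map_one, one_mul,
      AlgHom.coe_id, id_eq, IsScalarTower.coe_toAlgHom', ResidueField.algebraMap_eq]
    exact Ideal.Quotient.eq_zero_iff_mem.mpr m.2⟩

/-- For `a : A`, the element `1 ⊗ a − a(x) ⊗ 1` of `M̃`. -/
noncomputable def gen (a : A) : Mker k A :=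
  ⟨(1 : ResidueField A) ⊗ₜ[k] a - residue A a ⊗ₜ[k] (1 : A), by
    simp [Mker, RingHom.mem_ker, ev, Algebra.TensorProduct.lift_tmul]⟩

-- ============ my helpers ============

lemma ev_tmul (l : ResidueField A) (a : A) :
    ev k A (l ⊗ₜ[k] a) = l * residue A a := by
  simp [ev, Algebra.TensorProduct.lift_tmul, IsScalarTower.coe_toAlgHom',
    ResidueField.algebraMap_eq]

lemma toCotangent_smul (l : ResidueField A) (v : Mker k A) :
    (Mker k A).toCotangent (l • v) = l • (Mker k A).toCotangent v := by
  rw [Ideal.toCotangent_apply, Ideal.toCotangent_apply]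
  exact Submodule.Quotient.mk_smul _ l v

lemma coe_smul_mker (l : ResidueField A) (v : Mker k A) :
    ((l • v : Mker k A) : ResidueField A ⊗[k] A)
      = (l ⊗ₜ[k] (1 : A)) * (v : ResidueField A ⊗[k] A) := by
  rw [SetLike.val_smul_of_tower, Algebra.smul_def, Algebra.TensorProduct.algebraMap_apply]
  simp

lemma gen_add (a b : A) : gen k A (a + b) = gen k A a + gen k A b := by
  apply Subtype.ext
  simp only [gen, map_add, TensorProduct.tmul_add, TensorProduct.add_tmul,
    Submodule.coe_add]
  ring

lemma gen_algebraMap (c : k) : gen k A (algebraMap k A c) = 0 := by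
  apply Subtype.ext
  have h1 : (1 : ResidueField A) ⊗ₜ[k] (algebraMap k A c)
      = c • ((1 : ResidueField A) ⊗ₜ[k] (1 : A)) := by
    rw [Algebra.algebraMap_eq_smul_one, TensorProduct.tmul_smul]
  have h2 : residue A (algebraMap k A c) = c • (1 : ResidueField A) := by
    rw [← Algebra.algebraMap_eq_smul_one, IsScalarTower.algebraMap_apply k A (ResidueField A),
      ResidueField.algebraMap_eq]
  simp [gen, h1, h2, TensorProduct.smul_tmul']

lemma gen_one : gen k A 1 = 0 := by
  have := gen_algebraMap k A 1
  rwa [map_one] at this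

lemma toCot_gen_mul (a b : A) :
    (Mker k A).toCotangent (gen k A (a * b)) =
      residue A b • (Mker k A).toCotangent (gen k A a)
        + residue A a • (Mker k A).toCotangent (gen k A b) := by
  rw [← toCotangent_smul, ← toCotangent_smul, ← map_add, Ideal.toCotangent_eq]
  have : ((gen k A (a * b) : Mker k A) : ResidueField A ⊗[k] A)
      - ((residue A b • gen k A a + residue A a • gen k A b : Mker k A) : ResidueField A ⊗[k] A)
      = ((gen k A a : Mker k A) : ResidueField A ⊗[k] A)
        * ((gen k A b : Mker k A) : ResidueField A ⊗[k] A) := by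
    simp only [Submodule.coe_add, coe_smul_mker, gen, map_mul]
    simp only [sub_mul, mul_sub, Algebra.TensorProduct.tmul_mul_tmul, one_mul, mul_one]
    rw [mul_comm (residue A b) (residue A a)]
    ring
  rw [this, pow_two]
  exact Ideal.mul_mem_mul (gen k A a).2 (gen k A b).2

/-- `σ - ev σ ⊗ 1` lies in `M̃`. -/
noncomputable def redM (σ : ResidueField A ⊗[k] A) : Mker k A :=
  ⟨σ - algebraMap (ResidueField A) (ResidueField A ⊗[k] A) (ev k A σ), by
    simp [Mker, RingHom.mem_ker, map_sub, AlgHom.commutes, ev_tmul]⟩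

lemma redM_add (σ τ : ResidueField A ⊗[k] A) :
    redM k A (σ + τ) = redM k A σ + redM k A τ := by
  apply Subtype.ext
  simp only [redM, map_add, Submodule.coe_add]
  ring

lemma ev_smul (l : ResidueField A) (σ : ResidueField A ⊗[k] A) :
    ev k A (l • σ) = l * ev k A σ := by
  rw [Algebra.smul_def, map_mul, AlgHom.commutes]
  simp

lemma redM_smul (l : ResidueField A) (σ : ResidueField A ⊗[k] A) :
    redM k A (l • σ) = l • redM k A σ := by
  apply Subtype.ext
  rw [SetLike.val_smul_of_tower]
  simp only [redM, ev_smul, map_mul, smul_sub, Algebra.smul_def]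
  simp [ev_tmul, mul_sub, Algebra.TensorProduct.tmul_mul_tmul]

lemma redM_zero : redM k A 0 = 0 := by
  apply Subtype.ext; simp [redM]

lemma redM_tmul (l : ResidueField A) (a : A) :
    redM k A (l ⊗ₜ[k] a) = l • gen k A a := by
  apply Subtype.ext
  rw [coe_smul_mker]
  simp only [redM, gen, ev_tmul, Algebra.TensorProduct.algebraMap_apply, mul_sub,
    Algebra.TensorProduct.tmul_mul_tmul, mul_one, one_mul]
  simp

lemma redM_of_mem (σ : ResidueField A ⊗[k] A) (h : σ ∈ Mker k A) :
    redM k A σ = ⟨σ, h⟩ := by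
  apply Subtype.ext
  have : ev k A σ = 0 := h
  simp [redM, this]

lemma span_gen_top :
    Submodule.span (ResidueField A)
      (Set.range fun a : A => (Mker k A).toCotangent (gen k A a)) = ⊤ := by
  rw [eq_top_iff]
  rintro x -
  obtain ⟨m, rfl⟩ := Ideal.toCotangent_surjective (Mker k A) x
  obtain ⟨σ, hσ⟩ := m
  rw [← redM_of_mem k A σ hσ]
  have htop : (σ : ResidueField A ⊗[k] A) ∈
      Submodule.span (ResidueField A) {t : ResidueField A ⊗[k] A | ∃ x y, x ⊗ₜ[k] y = t} := by
    apply Submodule.span_subset_span k (ResidueField A)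
    rw [TensorProduct.span_tmul_eq_top]; trivial
  refine Submodule.span_induction ?_ ?_ ?_ ?_ htop
  · rintro _ ⟨l, a, rfl⟩ 
    rw [redM_tmul, toCotangent_smul]
    exact Submodule.smul_mem _ _ (Submodule.subset_span ⟨a, rfl⟩)
  · rw [redM_zero]; simp
  · intro x y _ _ hx hy
    rw [redM_add, map_add]
    exact Submodule.add_mem _ hx hy
  · intro l x _ hx
    rw [redM_smul, toCotangent_smul]
    exact Submodule.smul_mem _ _ hx

end LocalAlgebra

set_option maxHeartbeats 1000000 in
theorem stmt_9_aux (k A : Type*) [Field k] [CommRing A] [IsLocalRing A] [Algebra k A]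
    (ϑ : (maximalIdeal A).Cotangent →ₗ[ResidueField A] (Mker k A).Cotangent)
    (hϑ : ∀ m : maximalIdeal A,
      ϑ ((maximalIdeal A).toCotangent m) = (Mker k A).toCotangent (oneTmul k A m))
    (ψ : (Mker k A).Cotangent →ₗ[ResidueField A] Ω[ResidueField A⁄k])
    (hψ : ∀ a : A, ψ ((Mker k A).toCotangent (gen k A a)) =
      KaehlerDifferential.D k (ResidueField A) (residue A a)) :
    Function.Surjective ψ ∧ LinearMap.range ϑ = LinearMap.ker ψ := by
  classical
  constructor
  · rw [← LinearMap.range_eq_top, ← top_le_iff,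
      ← KaehlerDifferential.span_range_derivation k (ResidueField A), Submodule.span_le]
    rintro _ ⟨y, rfl⟩
    obtain ⟨a, rfl⟩ := IsLocalRing.residue_surjective y
    exact ⟨_, hψ a⟩
  · apply le_antisymm
    · -- range ϑ ≤ ker ψ
      rintro _ ⟨t, rfl⟩
      obtain ⟨m, rfl⟩ := Ideal.toCotangent_surjective _ t
      rw [LinearMap.mem_ker, hϑ m]
      have hres : residue A (m : A) = 0 := Ideal.Quotient.eq_zero_iff_mem.mpr m.2
      have hg : oneTmul k A m = gen k A (m : A) := by
        apply Subtype.ext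
        simp [oneTmul, gen, hres]
      rw [hg, hψ, hres, map_zero]
    · -- ker ψ ≤ range ϑ
      set S : Submodule (ResidueField A) ((Mker k A).Cotangent) := LinearMap.range ϑ with hS
      let π : (Mker k A).Cotangent →ₗ[ResidueField A] ((Mker k A).Cotangent ⧸ S) := S.mkQ
      let δ : A → ((Mker k A).Cotangent ⧸ S) :=
        fun a => π ((Mker k A).toCotangent (gen k A a))
      have hδadd : ∀ a b : A, δ (a + b) = δ a + δ b := by
        intro a b
        show π _ = π _ + π _
        rw [gen_add, map_add, map_add]
      have hδeq : ∀ a b : A, residue A a = residue A b → δ a = δ b := by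
        intro a b h
        have hmem : a - b ∈ maximalIdeal A := by
          rw [← Ideal.Quotient.eq_zero_iff_mem]
          show residue A (a - b) = 0
          rw [map_sub, h, sub_self]
        have hgen : gen k A a = gen k A b + oneTmul k A ⟨a - b, hmem⟩ := by
          apply Subtype.ext
          simp only [gen, oneTmul, Submodule.coe_add, h, TensorProduct.tmul_sub]
          ring
        have hz : π ((Mker k A).toCotangent (oneTmul k A ⟨a - b, hmem⟩)) = 0 := by
          rw [← hϑ]
          exact (Submodule.Quotient.mk_eq_zero _).mpr ⟨_, rfl⟩
        show π _ = π _
        rw [hgen, map_add, map_add, hz, add_zero]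
      have hδmul : ∀ a b : A, δ (a * b) = residue A b • δ a + residue A a • δ b := by
        intro a b
        show π _ = residue A b • π _ + residue A a • π _
        rw [toCot_gen_mul, map_add, map_smul, map_smul]
      have hδsmul : ∀ (c : k) (a : A), δ (algebraMap k A c * a) = algebraMap k (ResidueField A) c • δ a := by
        intro c a
        rw [hδmul]
        have h0 : δ (algebraMap k A c) = 0 := by
          show π ((Mker k A).toCotangent (gen k A (algebraMap k A c))) = 0
          rw [gen_algebraMap, map_zero, map_zero]
        rw [h0, smul_zero, zero_add, IsScalarTower.algebraMap_apply k A (ResidueField A),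
          ResidueField.algebraMap_eq]
      choose rep hrep using IsLocalRing.residue_surjective (R := A)
      have hD : ∀ a : A, δ (rep (residue A a)) = δ a := fun a => hδeq _ _ (hrep _)
      let Dlin : ResidueField A →ₗ[k] ((Mker k A).Cotangent ⧸ S) :=
        { toFun := fun y => δ (rep y)
          map_add' := by
            intro x y
            obtain ⟨a, rfl⟩ := IsLocalRing.residue_surjective x
            obtain ⟨b, rfl⟩ := IsLocalRing.residue_surjective y
            show δ (rep (residue A a + residue A b))
              = δ (rep (residue A a)) + δ (rep (residue A b))
            rw [← map_add, hD, hD, hD, hδadd]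
          map_smul' := by
            intro c x
            obtain ⟨a, rfl⟩ := IsLocalRing.residue_surjective x
            show δ (rep (c • residue A a)) = c • δ (rep (residue A a))
            have h1 : c • residue A a = residue A (algebraMap k A c * a) := by
              rw [map_mul, ← ResidueField.algebraMap_eq,
                ← IsScalarTower.algebraMap_apply k A (ResidueField A), Algebra.smul_def]
            rw [h1, hD, hD, hδsmul]
            exact algebraMap_smul (ResidueField A) c (δ a) }
      let D : Derivation k (ResidueField A) ((Mker k A).Cotangent ⧸ S) :=
        { toLinearMap := Dlin
          map_one_eq_zero' := by
            show δ (rep 1) = 0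
            have : δ (rep 1) = δ 1 := by
              apply hδeq; rw [hrep, map_one]
            rw [this]
            show π ((Mker k A).toCotangent (gen k A 1)) = 0
            rw [gen_one, map_zero, map_zero]
          leibniz' := by
            intro x y
            obtain ⟨a, rfl⟩ := IsLocalRing.residue_surjective x
            obtain ⟨b, rfl⟩ := IsLocalRing.residue_surjective y
            show δ (rep _) = residue A a • δ (rep _) + residue A b • δ (rep _)
            rw [← map_mul, hD, hD, hD, hδmul]
            abel }
      have hLψ : D.liftKaehlerDifferential ∘ₗ ψ = π := by
        apply LinearMap.ext_on (span_gen_top k A)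
        rintro _ ⟨a, rfl⟩
        rw [LinearMap.comp_apply, hψ, Derivation.liftKaehlerDifferential_comp_D]
        exact hD a
      rintro x hx
      rw [LinearMap.mem_ker] at hx
      have hπx : π x = 0 := by
        rw [← hLψ, LinearMap.comp_apply, hx, map_zero]
      rw [hS]
      rwa [← Submodule.Quotient.mk_eq_zero S]

/-- Let `k` be a field and `(A, 𝔪)` a local `k`-algebra with residue field
`K = A/𝔪`.  Let `ϑ : 𝔪/𝔪² → M̃/M̃²` be the `K`-linear map induced by `a ↦ 1 ⊗ a`, and let
`ψ : M̃/M̃² → Ω_{K/k}` be the canonical `K`-linear map (induced by the conormal sequence for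
`Ã → K`, characterized by `ψ[1⊗a − a(x)⊗1] = d_{K/k}(a(x))`).  Then the sequence
`𝔪/𝔪² → M̃/M̃² → Ω_{K/k} → 0` is exact: `ψ` is surjective and its kernel equals the image
of `ϑ`. -/
theorem stmt_9 (k A : Type*) [Field k] [CommRing A] [IsLocalRing A] [Algebra k A]
    (ϑ : (maximalIdeal A).Cotangent →ₗ[ResidueField A] (Mker k A).Cotangent)
    (hϑ : ∀ m : maximalIdeal A,
      ϑ ((maximalIdeal A).toCotangent m) = (Mker k A).toCotangent (oneTmul k A m))
    (ψ : (Mker k A).Cotangent →ₗ[ResidueField A] Ω[ResidueField A⁄k])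
    (hψ : ∀ a : A, ψ ((Mker k A).toCotangent (gen k A a)) =
      KaehlerDifferential.D k (ResidueField A) (residue A a)) :
    Function.Surjective ψ ∧ LinearMap.range ϑ = LinearMap.ker ψ := by
  exact stmt_9_aux k A ϑ hϑ ψ hψ
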